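/- Let C ⊆ {1,...,n}, f its characteristic function, and S = {I ⊆ {1,...,n} : I ≠ ∅ and |I| ∈ C}. Then for any sequence of finite sets A_1,...,A_n, |F_S(A)| = Σ_{k=1}^{n} c_k · i_{n,k}(A), where c_k = Σ_{j=1}^{k} (-1)^{k-j} C(k,j) f(j) (as integers). -/

import Mathlib

open Finset

/-- `G_J(A)`: intersection of the `A j` for `j ∈ J` with the complements
(relative to the union of all the `A i`) of the `A j` for `j ∉ J`. -/
def gset {α : Type*} {n : ℕ} (A : Fin n → Set α) (J : Finset (Fin n)) : Set α :=
  (⋂ j ∈ J, A j) ∩ ⋂ j ∈ Jᶜ, ((⋃ i, A i) \ A j)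

/-- `F_S(A) = ⋃_{J ∈ S} G_J(A)`. -/
def fset {α : Type*} {n : ℕ} (A : Fin n → Set α) (S : Finset (Finset (Fin n))) : Set α :=
  ⋃ J ∈ S, gset A J

/-- `i_{n,k}(A)`: the sum over all `k`-element subsets `J` of the index set of
the cardinality of `⋂_{j ∈ J} A j`. -/
noncomputable def icard {α : Type*} {n : ℕ} (A : Fin n → Set α) (k : ℕ) : ℕ :=
  ∑ J ∈ Finset.powersetCard k (Finset.univ : Finset (Fin n)), (⋂ j ∈ J, A j).ncard

/-- `σ_{n,j}(A)`: the sum over all `j`-element subsets `I` of the index set of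
the cardinality of `G_I(A)`. -/
noncomputable def sigmacard {α : Type*} {n : ℕ} (A : Fin n → Set α) (j : ℕ) : ℕ :=
  ∑ I ∈ Finset.powersetCard j (Finset.univ : Finset (Fin n)), (gset A I).ncard

section Aux

variable {α : Type*} {n : ℕ} (A : Fin n → Set α)

lemma mem_gset {I : Finset (Fin n)} {x : α} :
    x ∈ gset A I ↔ (∀ i ∈ I, x ∈ A i) ∧ ∀ i ∉ I, (x ∈ ⋃ i, A i) ∧ x ∉ A i := by
  simp [gset, Set.mem_iInter, Set.mem_diff]

lemma gset_disjoint {I J : Finset (Fin n)} (h : I ≠ J) :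
    Disjoint (gset A I) (gset A J) := by
  rw [Set.disjoint_left]
  intro x hxI hxJ
  rw [mem_gset] at hxI hxJ
  have : ∃ i, ¬ (i ∈ I ↔ i ∈ J) := by
    by_contra hc
    push_neg at hc
    exact h (Finset.ext fun i => hc i)
  obtain ⟨i, hi⟩ := this
  by_cases hiI : i ∈ I
  · have hiJ : i ∉ J := fun hiJ => hi ⟨fun _ => hiJ, fun _ => hiI⟩
    exact (hxJ.2 i hiJ).2 (hxI.1 i hiI)
  · have hiJ : i ∈ J := by
      by_contra hiJ
      exact hi ⟨fun h' => absurd h' hiI, fun h' => absurd h' hiJ⟩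
    exact (hxI.2 i hiI).2 (hxJ.1 i hiJ)

lemma gset_finite (hA : ∀ i, (A i).Finite) {I : Finset (Fin n)} (hI : I.Nonempty) :
    (gset A I).Finite := by
  obtain ⟨i, hi⟩ := hI
  exact (hA i).subset (fun x hx => ((mem_gset A).1 hx).1 i hi)

lemma ncard_finset_biUnion {ι β : Type*} (s : Finset ι) (g : ι → Set β)
    (hfin : ∀ i ∈ s, (g i).Finite)
    (hdisj : ∀ i ∈ s, ∀ j ∈ s, i ≠ j → Disjoint (g i) (g j)) :
    (⋃ i ∈ s, g i).ncard = ∑ i ∈ s, (g i).ncard := by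
  classical
  induction s using Finset.induction with
  | empty => simp
  | @insert a s ha ih =>
    rw [Finset.set_biUnion_insert, Finset.sum_insert ha]
    have hfin' : ∀ i ∈ s, (g i).Finite := fun i hi => hfin i (Finset.mem_insert_of_mem hi)
    have hUfin : (⋃ i ∈ s, g i).Finite := Set.Finite.biUnion s.finite_toSet hfin'
    have hd : Disjoint (g a) (⋃ i ∈ s, g i) := by
      rw [Set.disjoint_iUnion_right]
      intro i
      rw [Set.disjoint_iUnion_right]
      intro hi
      exact hdisj a (Finset.mem_insert_self a s) i (Finset.mem_insert_of_mem hi)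
        (fun h => ha (h ▸ hi))
    rw [Set.ncard_union_eq hd (hfin a (Finset.mem_insert_self a s)) hUfin,
      ih hfin' (fun i hi j hj hij =>
        hdisj i (Finset.mem_insert_of_mem hi) j (Finset.mem_insert_of_mem hj) hij)]

lemma iInter_eq_biUnion_gset {J : Finset (Fin n)} (hJ : J.Nonempty) :
    (⋂ j ∈ J, A j) =
      ⋃ I ∈ (Finset.univ : Finset (Fin n)).powerset.filter (fun I => J ⊆ I), gset A I := by
  classical
  ext x
  simp only [Set.mem_iInter, Set.mem_iUnion, Finset.mem_filter, Finset.mem_powerset,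
    exists_prop]
  constructor
  · intro hx
    refine ⟨Finset.univ.filter (fun i => x ∈ A i), ⟨Finset.subset_univ _, ?_⟩, ?_⟩
    · intro j hj
      simp only [Finset.mem_filter, Finset.mem_univ, true_and]
      exact hx j hj
    · rw [mem_gset]
      constructor
      · intro i hi
        exact (Finset.mem_filter.1 hi).2
      · intro i hi
        simp only [Finset.mem_filter, Finset.mem_univ, true_and] at hi
        obtain ⟨j, hj⟩ := hJ
        exact ⟨Set.mem_iUnion.2 ⟨j, hx j hj⟩, hi⟩
  · rintro ⟨I, ⟨-, hJI⟩, hx⟩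
    intro j hj
    exact ((mem_gset A).1 hx).1 j (hJI hj)

lemma ncard_iInter_eq (hA : ∀ i, (A i).Finite) {J : Finset (Fin n)} (hJ : J.Nonempty) :
    (⋂ j ∈ J, A j).ncard =
      ∑ I ∈ (Finset.univ : Finset (Fin n)).powerset.filter (fun I => J ⊆ I),
        (gset A I).ncard := by
  rw [iInter_eq_biUnion_gset A hJ]
  refine ncard_finset_biUnion _ _ ?_ ?_
  · intro I hI
    rw [Finset.mem_filter] at hI
    exact gset_finite A hA (hJ.mono hI.2)
  · intro I _ I' _ hII'
    exact gset_disjoint A hII'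

lemma icard_eq (hA : ∀ i, (A i).Finite) {k : ℕ} (hk : 1 ≤ k) :
    icard A k =
      ∑ I ∈ (Finset.univ : Finset (Fin n)).powerset, I.card.choose k * (gset A I).ncard := by
  classical
  unfold icard
  have step1 : ∀ J ∈ Finset.powersetCard k (Finset.univ : Finset (Fin n)),
      (⋂ j ∈ J, A j).ncard =
        ∑ I ∈ (Finset.univ : Finset (Fin n)).powerset,
          if J ⊆ I then (gset A I).ncard else 0 := by
    intro J hJ
    have hJcard : J.card = k := (Finset.mem_powersetCard.1 hJ).2
    have hJne : J.Nonempty := by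
      rw [← Finset.card_pos, hJcard]; exact hk
    rw [ncard_iInter_eq A hA hJne, Finset.sum_filter]
  rw [Finset.sum_congr rfl step1, Finset.sum_comm]
  refine Finset.sum_congr rfl (fun I _ => ?_)
  rw [← Finset.sum_filter]
  have hfilt : (Finset.powersetCard k (Finset.univ : Finset (Fin n))).filter (fun J => J ⊆ I)
      = I.powersetCard k := by
    ext J
    simp only [Finset.mem_filter, Finset.mem_powersetCard, Finset.subset_univ, true_and]
    tauto
  rw [hfilt, Finset.sum_const, Finset.card_powersetCard, smul_eq_mul]

lemma inner_alt_sum {m j : ℕ} (hm : m ≤ n) (hj1 : 1 ≤ j) :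
    ∑ k ∈ Finset.Icc 1 n, (-1 : ℤ) ^ (k - j) * (k.choose j) * (m.choose k)
      = if j = m then 1 else 0 := by
  by_cases hjm : j ≤ m
  · have hsub : Finset.Icc j m ⊆ Finset.Icc 1 n := by
      intro k hk
      rw [Finset.mem_Icc] at hk ⊢
      exact ⟨hj1.trans hk.1, hk.2.trans hm⟩
    rw [← Finset.sum_subset hsub (by
      intro k hk hk'
      rw [Finset.mem_Icc] at hk hk'
      push_neg at hk'
      by_cases h1 : k < j
      · rw [Nat.choose_eq_zero_of_lt h1]; ring
      · push_neg at h1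
        rw [Nat.choose_eq_zero_of_lt (hk' h1)]; ring)]
    have : ∀ k ∈ Finset.Icc j m,
        (-1 : ℤ) ^ (k - j) * (k.choose j) * (m.choose k)
          = (m.choose j : ℤ) * ((-1 : ℤ) ^ (k - j) * ((m - j).choose (k - j))) := by
      intro k hk
      rw [Finset.mem_Icc] at hk
      have := Nat.choose_mul (n := m) hk.1
      have hcast : ((m.choose k : ℤ) * (k.choose j : ℤ))
          = (m.choose j : ℤ) * ((m - j).choose (k - j) : ℤ) := by
        exact_mod_cast congrArg (Nat.cast : ℕ → ℤ) this
      calc (-1 : ℤ) ^ (k - j) * (k.choose j) * (m.choose k)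
          = (-1 : ℤ) ^ (k - j) * ((m.choose k : ℤ) * (k.choose j)) := by ring
        _ = (-1 : ℤ) ^ (k - j) * ((m.choose j : ℤ) * ((m - j).choose (k - j))) := by
            rw [hcast]
        _ = (m.choose j : ℤ) * ((-1 : ℤ) ^ (k - j) * ((m - j).choose (k - j))) := by ring
    rw [Finset.sum_congr rfl this, ← Finset.mul_sum]
    have hIcc : Finset.Icc j m = Finset.Ico j (m + 1) := by
      rw [Finset.Ico_add_one_right_eq_Icc]
    rw [hIcc, Finset.sum_Ico_eq_sum_range]
    have hrange : m + 1 - j = (m - j) + 1 := by omega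
    have : ∀ t ∈ Finset.range (m + 1 - j),
        (-1 : ℤ) ^ (j + t - j) * ((m - j).choose (j + t - j))
          = (-1 : ℤ) ^ t * ((m - j).choose t) := by
      intro t _
      have : j + t - j = t := by omega
      rw [this]
    rw [Finset.sum_congr rfl this, hrange, Int.alternating_sum_range_choose]
    by_cases hjm' : j = m
    · subst hjm'
      simp
    · have : m - j ≠ 0 := by omega
      rw [if_neg this, if_neg hjm', mul_zero]
  · push_neg at hjm
    rw [if_neg (by omega)]
    refine Finset.sum_eq_zero (fun k hk => ?_)
    by_cases h1 : k < j
    · rw [Nat.choose_eq_zero_of_lt h1]; ring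
    · push_neg at h1
      rw [Nat.choose_eq_zero_of_lt (by omega : m < k)]; ring

lemma key_identity (C : Finset ℕ) (hC : C ⊆ Finset.Icc 1 n) (f : ℕ → ℤ)
    (hf : ∀ j, f j = if j ∈ C then 1 else 0) {m : ℕ} (hm : m ≤ n) :
    ∑ k ∈ Finset.Icc 1 n,
        (∑ j ∈ Finset.Icc 1 k, (-1 : ℤ) ^ (k - j) * (k.choose j) * f j) * (m.choose k)
      = f m := by
  have step1 : ∀ k ∈ Finset.Icc 1 n,
      (∑ j ∈ Finset.Icc 1 k, (-1 : ℤ) ^ (k - j) * (k.choose j) * f j) * (m.choose k)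
        = ∑ j ∈ Finset.Icc 1 n, (-1 : ℤ) ^ (k - j) * (k.choose j) * f j * (m.choose k) := by
    intro k hk
    rw [Finset.mem_Icc] at hk
    rw [← Finset.sum_mul]
    congr 1
    refine Finset.sum_subset (by
      intro j hj
      rw [Finset.mem_Icc] at hj ⊢
      exact ⟨hj.1, hj.2.trans hk.2⟩) (fun j hj hj' => ?_)
    rw [Finset.mem_Icc] at hj hj'
    push_neg at hj'
    rw [Nat.choose_eq_zero_of_lt (hj' hj.1)]
    ring
  rw [Finset.sum_congr rfl step1, Finset.sum_comm]
  have step2 : ∀ j ∈ Finset.Icc 1 n,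
      ∑ k ∈ Finset.Icc 1 n, (-1 : ℤ) ^ (k - j) * (k.choose j) * f j * (m.choose k)
        = f j * (if j = m then 1 else 0) := by
    intro j hj
    rw [Finset.mem_Icc] at hj
    rw [← inner_alt_sum hm hj.1, Finset.mul_sum]
    refine Finset.sum_congr rfl (fun k _ => ?_)
    ring
  have step3 : ∀ j ∈ Finset.Icc 1 n,
      f j * (if j = m then 1 else 0) = if j = m then f m else 0 := by
    intro j _
    by_cases h : j = m
    · rw [if_pos h, if_pos h, h, mul_one]
    · rw [if_neg h, if_neg h, mul_zero]
  rw [Finset.sum_congr rfl step2, Finset.sum_congr rfl step3,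
    Finset.sum_ite_eq' (Finset.Icc 1 n) m (fun _ => f m)]
  by_cases hmem : m ∈ Finset.Icc 1 n
  · rw [if_pos hmem]
  · rw [if_neg hmem, hf]
    rw [Finset.mem_Icc] at hmem
    have hm0 : m = 0 := by omega
    have : m ∉ C := fun h => by
      have := hC h; rw [Finset.mem_Icc] at this; omega
    rw [if_neg this]

end Aux

theorem stmt_15 {α : Type*} {n : ℕ} (A : Fin n → Set α) (hA : ∀ i, (A i).Finite)
    (C : Finset ℕ) (hC : C ⊆ Finset.Icc 1 n) (f : ℕ → ℤ)
    (hf : ∀ j, f j = if j ∈ C then 1 else 0) :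
    ((fset A (Finset.univ.filter
        (fun I : Finset (Fin n) => I ≠ ∅ ∧ I.card ∈ C))).ncard : ℤ)
      = ∑ k ∈ Finset.Icc 1 n,
          (∑ j ∈ Finset.Icc 1 k, (-1 : ℤ) ^ (k - j) * (k.choose j) * f j)
            * icard A k := by
  classical
  set S := Finset.univ.filter (fun I : Finset (Fin n) => I ≠ ∅ ∧ I.card ∈ C) with hS
  -- RHS computation
  have hRHS : ∑ k ∈ Finset.Icc 1 n,
      (∑ j ∈ Finset.Icc 1 k, (-1 : ℤ) ^ (k - j) * (k.choose j) * f j) * icard A k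
        = ∑ I ∈ (Finset.univ : Finset (Fin n)).powerset,
            ((gset A I).ncard : ℤ) * f I.card := by
    have h1 : ∀ k ∈ Finset.Icc 1 n,
        (∑ j ∈ Finset.Icc 1 k, (-1 : ℤ) ^ (k - j) * (k.choose j) * f j) * icard A k
          = ∑ I ∈ (Finset.univ : Finset (Fin n)).powerset,
              (∑ j ∈ Finset.Icc 1 k, (-1 : ℤ) ^ (k - j) * (k.choose j) * f j)
                * (I.card.choose k) * ((gset A I).ncard : ℤ) := by
      intro k hk
      rw [Finset.mem_Icc] at hk
      rw [icard_eq A hA hk.1]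
      push_cast
      rw [Finset.mul_sum]
      refine Finset.sum_congr rfl (fun I _ => ?_)
      ring
    rw [Finset.sum_congr rfl h1, Finset.sum_comm]
    refine Finset.sum_congr rfl (fun I hI => ?_)
    have hIcard : I.card ≤ n := by
      simpa using Finset.card_le_card (Finset.mem_powerset.1 hI)
    rw [← key_identity C hC f hf hIcard, Finset.mul_sum]
    refine Finset.sum_congr rfl (fun k _ => ?_)
    ring
  rw [hRHS]
  -- LHS computation
  have hLHS : (fset A S).ncard = ∑ I ∈ S, (gset A I).ncard := by
    unfold fset
    refine ncard_finset_biUnion _ _ ?_ ?_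
    · intro I hI
      rw [hS, Finset.mem_filter] at hI
      exact gset_finite A hA (Finset.nonempty_iff_ne_empty.2 hI.2.1)
    · intro I _ I' _ h
      exact gset_disjoint A h
  rw [hLHS]
  push_cast
  rw [Finset.sum_filter]
  have : ∀ I ∈ (Finset.univ : Finset (Finset (Fin n))),
      (if I ≠ ∅ ∧ I.card ∈ C then ((gset A I).ncard : ℤ) else 0)
        = ((gset A I).ncard : ℤ) * f I.card := by
    intro I _
    rw [hf]
    by_cases h : I.card ∈ C
    · have hne : I ≠ ∅ := by
        intro he
        rw [he, Finset.card_empty] at h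
        have := hC h
        rw [Finset.mem_Icc] at this
        omega
      rw [if_pos ⟨hne, h⟩, if_pos h, mul_one]
    · rw [if_neg (fun hh => h hh.2), if_neg h, mul_zero]
  rw [Finset.sum_congr rfl this, ← Finset.powerset_univ]
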